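/- Let β, β' be elements of the exponent set E_Γ with β' < β. Then β + (𝔫^r(β') − β') ∈ E_Γ for every r ≥ 1, where 𝔫 denotes the successor function on E_Γ. -/
import Mathlib


/-- The set of exponents `E_Γ = ⋃_{1 ≤ j ≤ g} {β_j + k e_j : k ∈ ℤ_{≥0}}`. -/
def ExpSet (g : ℕ) (β e : ℕ → ℕ) : Set ℕ :=
  {m | ∃ j, 1 ≤ j ∧ j ≤ g ∧ ∃ k : ℕ, m = β j + k * e j}

/-- The successor function `𝔫` on `E_Γ`: the least element of `E_Γ` strictly greater
than `m`. -/
noncomputable def nextExp (g : ℕ) (β e : ℕ → ℕ) (m : ℕ) : ℕ :=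
  sInf {m' | m' ∈ ExpSet g β e ∧ m < m'}

section Aux

variable (n g : ℕ) (β e : ℕ → ℕ)

/-- `e j` divides `β j` and `e (j-1)`. -/
lemma ediv (he : ∀ j, 1 ≤ j → j ≤ g → e j = Nat.gcd (e (j - 1)) (β j)) :
    ∀ j, 1 ≤ j → j ≤ g → e j ∣ β j ∧ e j ∣ e (j - 1) := by
  intro j h1 h2
  rw [he j h1 h2]
  exact ⟨Nat.gcd_dvd_right _ _, Nat.gcd_dvd_left _ _⟩

/-- divisibility chain: `e b ∣ e a` for `a ≤ b ≤ g`. -/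
lemma echain (he : ∀ j, 1 ≤ j → j ≤ g → e j = Nat.gcd (e (j - 1)) (β j)) :
    ∀ d a, a + d ≤ g → e (a + d) ∣ e a := by
  intro d
  induction d with
  | zero => intro a _; simp
  | succ d ih =>
    intro a hle
    have h1 : 1 ≤ a + d + 1 := by omega
    have h2 : a + d + 1 ≤ g := by omega
    have := (ediv g β e he (a + d + 1) h1 h2).2
    have h3 : a + d + 1 - 1 = a + d := by omega
    rw [h3] at this
    exact dvd_trans (show e (a + (d+1)) ∣ e (a + d) by simpa [Nat.add_assoc] using this)
      (ih a (by omega))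

lemma epos (hn : 2 ≤ n) (he0 : e 0 = n)
    (he : ∀ j, 1 ≤ j → j ≤ g → e j = Nat.gcd (e (j - 1)) (β j)) :
    ∀ j, j ≤ g → 0 < e j := by
  intro j
  induction j with
  | zero => intro _; omega
  | succ j ih =>
    intro hle
    rw [he (j+1) (by omega) hle]
    have := ih (by omega)
    simp only [Nat.add_sub_cancel]
    exact Nat.gcd_pos_of_pos_left _ this

/-- `β` is strictly monotone on `[1, g]`. -/
lemma bstrict (hβmono : ∀ j, 1 ≤ j → j < g → β j < β (j + 1)) :
    ∀ d a, 1 ≤ a → a + d + 1 ≤ g → β a < β (a + d + 1) := by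
  intro d
  induction d with
  | zero => intro a h1 h2; exact hβmono a h1 (by omega)
  | succ d ih =>
    intro a h1 h2
    have h3 := ih a h1 (by omega)
    have h4 := hβmono (a + d + 1) (by omega) (by omega)
    have h5 : a + (d + 1) + 1 = (a + d + 1) + 1 := by omega
    rw [h5]
    omega

/-- The maximal index `j` with `β j ≤ m`, for `m ∈ E_Γ`, together with its
properties: `e j ∣ m`. -/
lemma maxIndex (he : ∀ j, 1 ≤ j → j ≤ g → e j = Nat.gcd (e (j - 1)) (β j))
    (hβmono : ∀ j, 1 ≤ j → j < g → β j < β (j + 1))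
    (m : ℕ) (hm : m ∈ ExpSet g β e) :
    ∃ j, 1 ≤ j ∧ j ≤ g ∧ β j ≤ m ∧ (∀ j', j < j' → j' ≤ g → m < β j') ∧ e j ∣ m := by
  obtain ⟨i, hi1, hig, k, hk⟩ := hm
  classical
  set P : ℕ → Prop := fun i => 1 ≤ i ∧ β i ≤ m with hP
  have hPi : P i := by
    refine ⟨hi1, ?_⟩
    have hdvd : e i ∣ β i := (ediv g β e he i hi1 hig).1
    omega
  set j := Nat.findGreatest P g with hj
  have hij : i ≤ j := Nat.le_findGreatest hig hPi
  have hjg : j ≤ g := Nat.findGreatest_le g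
  have hPj : P j := Nat.findGreatest_spec (m := i) hig hPi |>.imp id id
  refine ⟨j, hPj.1, hjg, hPj.2, ?_, ?_⟩
  · intro j' hjj' hj'g
    have h := Nat.findGreatest_is_greatest hjj' hj'g
    rw [hP] at h
    by_contra hc
    push_neg at hc
    exact h ⟨le_trans hPj.1 (le_of_lt hjj'), hc⟩
  · -- e j ∣ m : m = β i + k * e i, e j ∣ e i ∣ β i
    have hchain : e j ∣ e i := by
      have := echain g β e he (j - i) i (by omega)
      have h3 : i + (j - i) = j := by omega
      rwa [h3] at this
    have hdvd : e i ∣ β i := (ediv g β e he i hi1 hig).1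
    rw [hk]
    exact dvd_trans hchain (Dvd.dvd.add (by exact hdvd) (Dvd.dvd.mul_left (dvd_refl _) k))

/-- Conversely: multiples of `e j` at least `β j` are in `E_Γ`. -/
lemma mult_mem (he : ∀ j, 1 ≤ j → j ≤ g → e j = Nat.gcd (e (j - 1)) (β j))
    (hepos : ∀ j, j ≤ g → 0 < e j)
    (j m : ℕ) (h1 : 1 ≤ j) (h2 : j ≤ g) (h3 : β j ≤ m) (h4 : e j ∣ m) :
    m ∈ ExpSet g β e := by
  have hdvd : e j ∣ β j := (ediv g β e he j h1 h2).1
  have hdvd2 : e j ∣ m - β j := Nat.dvd_sub h4 hdvd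
  obtain ⟨k, hk⟩ := hdvd2
  rw [mul_comm] at hk
  exact ⟨j, h1, h2, k, by omega⟩

/-- Key lemma: one-step statement. -/
lemma key_step (hn : 2 ≤ n) (hg : 1 ≤ g)
    (he0 : e 0 = n)
    (he : ∀ j, 1 ≤ j → j ≤ g → e j = Nat.gcd (e (j - 1)) (β j))
    (hβmono : ∀ j, 1 ≤ j → j < g → β j < β (j + 1))
    (x y : ℕ) (hx : x ∈ ExpSet g β e) (hy : y ∈ ExpSet g β e) (hxy : x < y) :
    x < nextExp g β e x ∧ nextExp g β e x ∈ ExpSet g β e ∧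
      y + (nextExp g β e x - x) ∈ ExpSet g β e := by
  have hepos := epos n g β e hn he0 he
  obtain ⟨j, hj1, hjg, hjx, hjmax, hjdvd⟩ := maxIndex g β e he hβmono x hx
  -- the candidate x + e j is in the set
  have hcand : x + e j ∈ ExpSet g β e :=
    mult_mem g β e he hepos j (x + e j) hj1 hjg (by omega) (by exact Dvd.dvd.add hjdvd dvd_rfl)
  have hcand' : x + e j ∈ {m' | m' ∈ ExpSet g β e ∧ x < m'} :=
    ⟨hcand, by have := hepos j hjg; omega⟩
  have hne : {m' | m' ∈ ExpSet g β e ∧ x < m'}.Nonempty := ⟨_, hcand'⟩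
  set N := nextExp g β e x with hN
  have hNmem : N ∈ {m' | m' ∈ ExpSet g β e ∧ x < m'} := Nat.sInf_mem hne
  have hNle : ∀ m', m' ∈ {m' | m' ∈ ExpSet g β e ∧ x < m'} → N ≤ m' :=
    fun m' hm' => Nat.sInf_le hm'
  obtain ⟨hNE, hxN⟩ := hNmem
  refine ⟨hxN, hNE, ?_⟩
  have hNy : N ≤ y := hNle y ⟨hy, hxy⟩
  obtain ⟨i, hi1, hig, hiN, himax, hidvd⟩ := maxIndex g β e he hβmono N hNE
  -- j ≤ i
  have hji : j ≤ i := by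
    by_contra hcon
    push_neg at hcon
    have := himax j hcon hjg
    omega
  -- e i ∣ x
  have hidvdx : e i ∣ x := by
    rcases eq_or_lt_of_le hji with hEq | hLt
    · rw [← hEq]; exact hjdvd
    · -- i > j, so j < g and N ≤ β (j+1), hence i ≤ j + 1, so i = j + 1
      have hjltg : j < g := lt_of_lt_of_le hLt hig
      have hb1mem : β (j + 1) ∈ ExpSet g β e := ⟨j + 1, by omega, by omega, 0, by ring⟩
      have hxb1 : x < β (j + 1) := hjmax (j + 1) (by omega) (by omega)
      have hNb1 : N ≤ β (j + 1) := hNle _ ⟨hb1mem, hxb1⟩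
      have hile : i ≤ j + 1 := by
        by_contra hcon
        push_neg at hcon
        have := bstrict g β hβmono (i - (j + 1) - 1) (j + 1) (by omega) (by omega)
        have h5 : (j + 1) + (i - (j + 1) - 1) + 1 = i := by omega
        rw [h5] at this
        omega
      have hieq : i = j + 1 := by omega
      have := (ediv g β e he i hi1 hig).2
      rw [hieq] at this ⊢
      simp only [Nat.add_sub_cancel] at this
      exact dvd_trans this hjdvd
  have hddvd : e i ∣ N - x := Nat.dvd_sub hidvd hidvdx
  -- now y
  obtain ⟨j', hj'1, hj'g, hj'y, hj'max, hj'dvd⟩ := maxIndex g β e he hβmono y hy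
  have hij' : i ≤ j' := by
    by_contra hcon
    push_neg at hcon
    have := hj'max i hcon hig
    omega
  have hchain : e j' ∣ e i := by
    have := echain g β e he (j' - i) i (by omega)
    have h3 : i + (j' - i) = j' := by omega
    rwa [h3] at this
  exact mult_mem g β e he hepos j' (y + (N - x)) hj'1 hj'g (by omega)
    (Dvd.dvd.add hj'dvd (dvd_trans hchain hddvd))

end Aux

/-- If `β', β ∈ E_Γ` with `β' < β`, then `β + (𝔫^r(β') − β') ∈ E_Γ` for every `r ≥ 1`. -/
theorem add_iterate_next_sub_mem_expSet (n g : ℕ) (hn : 2 ≤ n) (hg : 1 ≤ g)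
    (β e : ℕ → ℕ)
    (he0 : e 0 = n)
    (he : ∀ j, 1 ≤ j → j ≤ g → e j = Nat.gcd (e (j - 1)) (β j))
    (heg : e g = 1)
    (hβmono : ∀ j, 1 ≤ j → j < g → β j < β (j + 1))
    (hβ1 : ¬ n ∣ β 1)
    (β' b : ℕ) (hβ'mem : β' ∈ ExpSet g β e) (hbmem : b ∈ ExpSet g β e)
    (hlt : β' < b) :
    ∀ r : ℕ, 1 ≤ r → b + ((nextExp g β e)^[r] β' - β') ∈ ExpSet g β e := by
  have main : ∀ r : ℕ, (nextExp g β e)^[r] β' ∈ ExpSet g β e ∧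
      β' ≤ (nextExp g β e)^[r] β' ∧
      b + ((nextExp g β e)^[r] β' - β') ∈ ExpSet g β e := by
    intro r
    induction r with
    | zero => simpa using ⟨hβ'mem, hbmem⟩
    | succ r ih =>
      obtain ⟨hxE, hβ'x, hbE⟩ := ih
      set x := (nextExp g β e)^[r] β' with hx
      have hxlt : x < b + (x - β') := by omega
      have hkey := key_step n g β e hn hg he0 he hβmono x (b + (x - β')) hxE hbE hxlt
      obtain ⟨hxN, hNE, hyd⟩ := hkey
      have hiter : (nextExp g β e)^[r + 1] β' = nextExp g β e x := by
        rw [Function.iterate_succ_apply']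
      rw [hiter]
      refine ⟨hNE, by omega, ?_⟩
      have harith : b + (nextExp g β e x - β') = b + (x - β') + (nextExp g β e x - x) := by
        omega
      rw [harith]
      exact hyd
  intro r _
  exact (main r).2.2
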